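/- Let D ⊆ ℝⁿ be a compact set, g : D → ℝ Lipschitz with constant l_g, and let (x₁,y₁),…,(x_N,y_N) be an ε̄-noisy dataset generated by g with covering radius h(X,D) = h > 0. Fix ε ≥ ε̄ and ρ > 0. Let l* be the minimal Lipschitz constant over all Lipschitz f : D → ℝ with max_i ‖yᵢ − f(xᵢ)‖ ≤ ε. If f : D → ℝ is Lipschitz with max_i ‖yᵢ − f(xᵢ)‖ ≤ ε and Lip(f) ≤ l* + ρ, then sup_{x∈D} ‖g(x) − f(x)‖ ≤ (2·l_g + ρ)·h + 2ε. -/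

import Mathlib

open scoped NNReal

/-- The Lipschitz seminorm of `f` on the set `D`. -/
noncomputable def lipSemi {n : ℕ} (D : Set (EuclideanSpace ℝ (Fin n)))
    (f : EuclideanSpace ℝ (Fin n) → ℝ) : ℝ :=
  sInf {γ : ℝ | 0 ≤ γ ∧ ∀ x ∈ D, ∀ y ∈ D, ‖f x - f y‖ ≤ γ * ‖x - y‖}

lemma lipSemi_spec {n : ℕ} (D : Set (EuclideanSpace ℝ (Fin n)))
    (f : EuclideanSpace ℝ (Fin n) → ℝ) (C : ℝ) (hC : 0 ≤ C)
    (hf : ∀ x ∈ D, ∀ y ∈ D, ‖f x - f y‖ ≤ C * ‖x - y‖) :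
    (0 ≤ lipSemi D f ∧ ∀ x ∈ D, ∀ y ∈ D, ‖f x - f y‖ ≤ lipSemi D f * ‖x - y‖)
      ∧ lipSemi D f ≤ C := by
  set S : Set ℝ := {γ : ℝ | 0 ≤ γ ∧ ∀ x ∈ D, ∀ y ∈ D, ‖f x - f y‖ ≤ γ * ‖x - y‖} with hS
  have hne : S.Nonempty := ⟨C, hC, hf⟩
  have hbdd : BddBelow S := ⟨0, fun γ hγ => hγ.1⟩
  have hclosed : IsClosed S := by
    have : S = {γ : ℝ | 0 ≤ γ} ∩
        ⋂ x ∈ D, ⋂ y ∈ D, {γ : ℝ | ‖f x - f y‖ ≤ γ * ‖x - y‖} := by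
      ext γ
      simp only [hS, Set.mem_inter_iff, Set.mem_setOf_eq, Set.mem_iInter]
    rw [this]
    refine (isClosed_le continuous_const continuous_id).inter ?_
    refine isClosed_biInter fun x hx => isClosed_biInter fun y hy => ?_
    exact isClosed_le continuous_const (continuous_id.mul continuous_const)
  have hmem : sInf S ∈ S := hclosed.csInf_mem hne hbdd
  exact ⟨⟨hmem.1, hmem.2⟩, csInf_le hbdd ⟨hC, hf⟩⟩

theorem stmt9 {n N : ℕ} (hN : 0 < N)
    (D : Set (EuclideanSpace ℝ (Fin n))) (hD : IsCompact D)
    (g : EuclideanSpace ℝ (Fin n) → ℝ) (lg : ℝ) (hlg : 0 ≤ lg)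
    (hg : ∀ x ∈ D, ∀ y ∈ D, ‖g x - g y‖ ≤ lg * ‖x - y‖)
    (xs : Fin N → EuclideanSpace ℝ (Fin n)) (hxs : ∀ i, xs i ∈ D) (ys : Fin N → ℝ)
    (εbar ε ρ h : ℝ) (hεbar : 0 ≤ εbar) (hεε : εbar ≤ ε) (hρ : 0 < ρ) (hh : 0 < h)
    (hnoise : ∀ i, ‖g (xs i) - ys i‖ ≤ εbar)
    (hcov : ∀ x ∈ D, Metric.infDist x (Set.range xs) ≤ h)
    (lstar : ℝ)
    (hlstar : lstar = sInf {l : ℝ | ∃ f : EuclideanSpace ℝ (Fin n) → ℝ,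
        (∃ C : ℝ≥0, LipschitzOnWith C f D) ∧
        (∀ i, ‖ys i - f (xs i)‖ ≤ ε) ∧
        l = lipSemi D f})
    (f : EuclideanSpace ℝ (Fin n) → ℝ)
    (hfLip : ∃ C : ℝ≥0, LipschitzOnWith C f D)
    (hfloss : ∀ i, ‖ys i - f (xs i)‖ ≤ ε)
    (hfmin : lipSemi D f ≤ lstar + ρ) :
    ∀ x ∈ D, ‖g x - f x‖ ≤ (2 * lg + ρ) * h + 2 * ε := by
  -- basic facts about lipSemi of f
  obtain ⟨Cf, hCf⟩ := hfLip
  have hfC : ∀ x ∈ D, ∀ y ∈ D, ‖f x - f y‖ ≤ (Cf : ℝ) * ‖x - y‖ := by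
    intro x hx y hy
    have := hCf.dist_le_mul x hx y hy
    simpa [dist_eq_norm] using this
  have hfspec := lipSemi_spec D f (Cf : ℝ) Cf.coe_nonneg hfC
  have hgspec := lipSemi_spec D g lg hlg hg
  -- lstar ≤ lipSemi D g ≤ lg
  have hgmem : lipSemi D g ∈ {l : ℝ | ∃ f : EuclideanSpace ℝ (Fin n) → ℝ,
      (∃ C : ℝ≥0, LipschitzOnWith C f D) ∧
      (∀ i, ‖ys i - f (xs i)‖ ≤ ε) ∧ l = lipSemi D f} := by
    refine ⟨g, ⟨⟨lg, hlg⟩, ?_⟩, ?_, rfl⟩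
    · refine LipschitzOnWith.of_dist_le_mul fun x hx y hy => ?_
      exact (by simpa [dist_eq_norm] using hg x hx y hy : dist (g x) (g y) ≤ lg * dist x y)
    · intro i
      have := hnoise i
      calc ‖ys i - g (xs i)‖ = ‖g (xs i) - ys i‖ := by rw [norm_sub_rev]
        _ ≤ εbar := this
        _ ≤ ε := hεε
  have hTbdd : BddBelow {l : ℝ | ∃ f : EuclideanSpace ℝ (Fin n) → ℝ,
      (∃ C : ℝ≥0, LipschitzOnWith C f D) ∧
      (∀ i, ‖ys i - f (xs i)‖ ≤ ε) ∧ l = lipSemi D f} := by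
    refine ⟨0, fun l hl => ?_⟩
    obtain ⟨f', ⟨C', hC'⟩, _, rfl⟩ := hl
    have hfC' : ∀ x ∈ D, ∀ y ∈ D, ‖f' x - f' y‖ ≤ (C' : ℝ) * ‖x - y‖ := by
      intro x hx y hy
      simpa [dist_eq_norm] using hC'.dist_le_mul x hx y hy
    exact (lipSemi_spec D f' (C' : ℝ) C'.coe_nonneg hfC').1.1
  have hlstar_le : lstar ≤ lg := by
    rw [hlstar]
    exact le_trans (csInf_le hTbdd hgmem) hgspec.2
  have hlipf : lipSemi D f ≤ lg + ρ := le_trans hfmin (by linarith)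
  -- main estimate
  intro x hx
  -- find nearest data point
  have hrne : (Set.range xs).Nonempty := ⟨xs ⟨0, hN⟩, Set.mem_range_self _⟩
  have hrc : IsCompact (Set.range xs) := (Set.finite_range xs).isCompact
  obtain ⟨z, hz, hzd⟩ := hrc.exists_infDist_eq_dist hrne x
  obtain ⟨i, rfl⟩ := hz
  have hdist : ‖x - xs i‖ ≤ h := by
    have := hcov x hx
    rw [hzd] at this
    simpa [dist_eq_norm] using this
  have h1 : ‖g x - g (xs i)‖ ≤ lg * h := by
    calc ‖g x - g (xs i)‖ ≤ lg * ‖x - xs i‖ := hg x hx _ (hxs i)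
      _ ≤ lg * h := by nlinarith
  have h2 : ‖g (xs i) - ys i‖ ≤ ε := le_trans (hnoise i) hεε
  have h3 : ‖ys i - f (xs i)‖ ≤ ε := hfloss i
  have h4 : ‖f (xs i) - f x‖ ≤ (lg + ρ) * h := by
    calc ‖f (xs i) - f x‖ = ‖f x - f (xs i)‖ := by rw [norm_sub_rev]
      _ ≤ lipSemi D f * ‖x - xs i‖ := hfspec.1.2 x hx _ (hxs i)
      _ ≤ (lg + ρ) * h := by
          have h0 := hfspec.1.1
          have hn : (0:ℝ) ≤ ‖x - xs i‖ := norm_nonneg _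
          nlinarith
  calc ‖g x - f x‖
      = ‖(g x - g (xs i)) + (g (xs i) - ys i) + (ys i - f (xs i)) + (f (xs i) - f x)‖ := by
        ring_nf
    _ ≤ ‖(g x - g (xs i)) + (g (xs i) - ys i) + (ys i - f (xs i))‖ + ‖f (xs i) - f x‖ :=
        norm_add_le _ _
    _ ≤ ‖(g x - g (xs i)) + (g (xs i) - ys i)‖ + ‖ys i - f (xs i)‖ + ‖f (xs i) - f x‖ := by
        gcongr; exact norm_add_le _ _
    _ ≤ ‖g x - g (xs i)‖ + ‖g (xs i) - ys i‖ + ‖ys i - f (xs i)‖ + ‖f (xs i) - f x‖ := by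
        gcongr ?_ + _ + _; exact norm_add_le _ _
    _ ≤ lg * h + ε + ε + (lg + ρ) * h := by gcongr
    _ = (2 * lg + ρ) * h + 2 * ε := by ring
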